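/- If a word w contains twins (two disjoint equal subsequences) of length m, then w contains monotone twins of length m, i.e., twins w₁, w₂ given by index sequences p₁<...<p_m and p₁'<...<p_m' such that p_i < p_i' for all i. -/

import Mathlib

/-- Twins of length `m` in a word `w`: two disjoint strictly increasing index
sequences whose induced subsequences are equal as words. -/
def HasTwins (w : List ℕ) (m : ℕ) : Prop :=
  ∃ p q : List ℕ,
    p.Chain' (· < ·) ∧ q.Chain' (· < ·) ∧
    (∀ i ∈ p, i < w.length) ∧ (∀ i ∈ q, i < w.length) ∧
    p.Disjoint q ∧ p.length = m ∧ q.length = m ∧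
    p.map (fun i => w.getD i 0) = q.map (fun i => w.getD i 0)

/-- Monotone twins: additionally `p i < q i` for every position `i`. -/
def HasMonotoneTwins (w : List ℕ) (m : ℕ) : Prop :=
  ∃ p q : List ℕ,
    p.Chain' (· < ·) ∧ q.Chain' (· < ·) ∧
    (∀ i ∈ p, i < w.length) ∧ (∀ i ∈ q, i < w.length) ∧
    p.Disjoint q ∧ p.length = m ∧ q.length = m ∧
    p.map (fun i => w.getD i 0) = q.map (fun i => w.getD i 0) ∧
    (∀ i < m, p.getD i 0 < q.getD i 0)

theorem stmt0 (w : List ℕ) (m : ℕ) (h : HasTwins w m) : HasMonotoneTwins w m := by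
  obtain ⟨p, q, hp, hq, hpw, hqw, hdisj, hpl, hql, hmap⟩ := h
  set f : ℕ → ℕ := fun i => w.getD i 0 with hf
  have hpg : ∀ i j (hi : i < p.length) (hj : j < p.length), i < j → p[i] < p[j] := by
    intro i j hi hj hij
    exact List.pairwise_iff_get.mp (List.isChain_iff_pairwise.mp hp) ⟨i, hi⟩ ⟨j, hj⟩ hij
  have hqg : ∀ i j (hi : i < q.length) (hj : j < q.length), i < j → q[i] < q[j] := by
    intro i j hi hj hij
    exact List.pairwise_iff_get.mp (List.isChain_iff_pairwise.mp hq) ⟨i, hi⟩ ⟨j, hj⟩ hij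
  have hne : ∀ i (hi : i < m), p[i]'(hpl ▸ hi) ≠ q[i]'(hql ▸ hi) := by
    intro i hi heq
    have h1 : p[i]'(hpl ▸ hi) ∈ p := List.getElem_mem _
    have h2 : p[i]'(hpl ▸ hi) ∈ q := by rw [heq]; exact List.getElem_mem _
    exact hdisj h1 h2
  have hval : ∀ i (hi : i < m), f (p[i]'(hpl ▸ hi)) = f (q[i]'(hql ▸ hi)) := by
    intro i hi
    have h1 : (p.map f)[i]'(by simpa [hpl]) = (q.map f)[i]'(by simpa [hql]) := by
      simp only [hmap]
    simpa using h1
  have hlen : (List.zipWith min p q).length = m := by simp [hpl, hql]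
  have hlen' : (List.zipWith max p q).length = m := by simp [hpl, hql]
  refine ⟨List.zipWith min p q, List.zipWith max p q, ?_, ?_, ?_, ?_, ?_, hlen, hlen', ?_, ?_⟩
  · refine List.isChain_iff_getElem.mpr ?_
    intro i hi
    have hi' : i + 1 < m := by rw [hlen] at hi; omega
    simp only [List.get_eq_getElem, List.getElem_zipWith]
    exact lt_min
      ((min_le_left _ _).trans_lt (hpg i (i+1) (by omega) (by omega) (Nat.lt_succ_self i)))
      ((min_le_right _ _).trans_lt (hqg i (i+1) (by omega) (by omega) (Nat.lt_succ_self i)))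
  · refine List.isChain_iff_getElem.mpr ?_
    intro i hi
    have hi' : i + 1 < m := by rw [hlen'] at hi; omega
    simp only [List.get_eq_getElem, List.getElem_zipWith]
    exact max_lt
      ((hpg i (i+1) (by omega) (by omega) (Nat.lt_succ_self i)).trans_le (le_max_left _ _))
      ((hqg i (i+1) (by omega) (by omega) (Nat.lt_succ_self i)).trans_le (le_max_right _ _))
  · intro x hx
    obtain ⟨i, hi, rfl⟩ := List.getElem_of_mem hx
    rw [List.getElem_zipWith]
    rcases min_choice (p[i]'(by simp [hpl, hql] at hi ⊢; omega))
        (q[i]'(by simp [hpl, hql] at hi ⊢; omega)) with h' | h' <;> rw [h']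
    · exact hpw _ (List.getElem_mem _)
    · exact hqw _ (List.getElem_mem _)
  · intro x hx
    obtain ⟨i, hi, rfl⟩ := List.getElem_of_mem hx
    rw [List.getElem_zipWith]
    rcases max_choice (p[i]'(by simp [hpl, hql] at hi ⊢; omega))
        (q[i]'(by simp [hpl, hql] at hi ⊢; omega)) with h' | h' <;> rw [h']
    · exact hpw _ (List.getElem_mem _)
    · exact hqw _ (List.getElem_mem _)
  · -- disjoint
    intro x hx hx'
    obtain ⟨i, hi, rfl⟩ := List.getElem_of_mem hx
    obtain ⟨j, hj, hji⟩ := List.getElem_of_mem hx'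
    rw [hlen] at hi; rw [hlen'] at hj
    rw [List.getElem_zipWith, List.getElem_zipWith] at hji
    rcases lt_trichotomy i j with hij | rfl | hij
    · have : min (p[i]'(hpl ▸ hi)) (q[i]'(hql ▸ hi)) < max (p[j]'(hpl ▸ hj)) (q[j]'(hql ▸ hj)) :=
        (min_le_left _ _).trans_lt ((hpg i j (hpl ▸ hi) (hpl ▸ hj) hij).trans_le (le_max_left _ _))
      omega
    · exact absurd hji (ne_of_gt (min_lt_max.mpr (hne i hi)))
    · rcases min_choice (p[i]'(hpl ▸ hi)) (q[i]'(hql ▸ hi)) with h1 | h1 <;>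
      rcases max_choice (p[j]'(hpl ▸ hj)) (q[j]'(hql ▸ hj)) with h2 | h2 <;>
      rw [h1, h2] at hji
      · exact absurd hji (ne_of_lt (hpg j i (hpl ▸ hj) (hpl ▸ hi) hij))
      · have h3 : p[i]'(hpl ▸ hi) ∈ q := by rw [← hji]; exact List.getElem_mem _
        exact hdisj (List.getElem_mem _) h3
      · have h3 : p[j]'(hpl ▸ hj) ∈ q := by rw [hji]; exact List.getElem_mem _
        exact hdisj (List.getElem_mem _) h3
      · exact absurd hji (ne_of_lt (hqg j i (hql ▸ hj) (hql ▸ hi) hij))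
  · -- map equality
    apply List.ext_getElem (by simp [hpl, hql])
    intro i h1 h2
    have hi : i < m := by simp [hlen] at h1; omega
    simp only [List.getElem_map, List.getElem_zipWith]
    have hv := hval i hi
    rcases min_choice (p[i]'(hpl ▸ hi)) (q[i]'(hql ▸ hi)) with h1' | h1' <;>
    rcases max_choice (p[i]'(hpl ▸ hi)) (q[i]'(hql ▸ hi)) with h2' | h2' <;>
    rw [h1', h2'] <;> first | rfl | exact hv | exact hv.symm
  · intro i hi
    rw [List.getD_eq_getElem _ _ (hlen ▸ hi), List.getD_eq_getElem _ _ (hlen' ▸ hi)]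
    simp only [List.getElem_zipWith]
    exact min_lt_max.mpr (hne i hi)
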